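/- Let f : ℝ^p → ℝ be twice continuously differentiable with ∇²f(θ) ⪰ m·I for all θ (m > 0) and with L-Lipschitz Hessian. Fix κ₁ ∈ (0, 1/2) and set η = (m²/(8L))·min{3(1 − 2κ₁), 2}. Let θ ∈ ℝ^p with ‖∇f(θ)‖₂ < η, and suppose g(θ) ∈ ℝ^p and H(θ) ∈ ℝ^{p×p} satisfy ‖g(θ) − ∇f(θ)‖₂ ≤ γ_g ≤ η and ‖H(θ) − ∇²f(θ)‖₂ ≤ γ_h ≤ m/2. Set Δθ_nt = −H(θ)⁻¹g(θ) and λ̃(θ)² = g(θ)ᵀH(θ)⁻¹g(θ). If ζ ≥ 8γ_g η/m + 16γ_h η²/m², then f(θ + Δθ_nt) ≤ f(θ) − κ₁ λ̃(θ)² + ζ/2. -/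

import Mathlib

open scoped RealInnerProductSpace

/-- The Hessian of `f`, as the Fréchet derivative of the gradient. -/
noncomputable def hessianOf {p : ℕ} (f : EuclideanSpace ℝ (Fin p) → ℝ)
    (θ : EuclideanSpace ℝ (Fin p)) :
    EuclideanSpace ℝ (Fin p) →L[ℝ] EuclideanSpace ℝ (Fin p) :=
  fderiv ℝ (gradient f) θ

set_option maxHeartbeats 2000000 in
/-- when the gradient is small, the noisy Newton step with unit stepsize
satisfies the robust backtracking-linesearch exit condition. -/
theorem robust_newton_unit_step {p : ℕ} (f : EuclideanSpace ℝ (Fin p) → ℝ)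
    (m L κ₁ η γg γh ζ : ℝ) (hm : 0 < m) (hL : 0 < L)
    (hκ₁ : κ₁ ∈ Set.Ioo (0 : ℝ) (1 / 2))
    (hf : ContDiff ℝ 2 f)
    (hconv : ∀ θ' v : EuclideanSpace ℝ (Fin p), m * ‖v‖ ^ 2 ≤ ⟪hessianOf f θ' v, v⟫)
    (hlip : ∀ θ₁ θ₂ : EuclideanSpace ℝ (Fin p),
      ‖hessianOf f θ₁ - hessianOf f θ₂‖ ≤ L * ‖θ₁ - θ₂‖)
    (hη : η = m ^ 2 / (8 * L) * min (3 * (1 - 2 * κ₁)) 2)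
    (θ : EuclideanSpace ℝ (Fin p)) (hθ : ‖gradient f θ‖ < η)
    (g : EuclideanSpace ℝ (Fin p))
    (H : EuclideanSpace ℝ (Fin p) →L[ℝ] EuclideanSpace ℝ (Fin p))
    (hg : ‖g - gradient f θ‖ ≤ γg) (hH : ‖H - hessianOf f θ‖ ≤ γh)
    (hγgη : γg ≤ η) (hγhm : γh ≤ m / 2)
    (Δ : EuclideanSpace ℝ (Fin p)) (hΔ : Δ = -(H.inverse g))
    (lam2 : ℝ) (hlam2 : lam2 = ⟪g, H.inverse g⟫)
    (hζ : 8 * γg * η / m + 16 * γh * η ^ 2 / m ^ 2 ≤ ζ) :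
    f (θ + Δ) ≤ f θ - κ₁ * lam2 + ζ / 2 := by
  obtain ⟨hκ0, hκh⟩ := hκ₁
  -- basic positivity
  have hηpos : 0 < η := by
    rw [hη]
    have h1 : (0:ℝ) < min (3 * (1 - 2 * κ₁)) 2 := by
      apply lt_min <;> nlinarith
    positivity
  have hγg0 : 0 ≤ γg := le_trans (norm_nonneg _) hg
  have hγh0 : 0 ≤ γh := le_trans (norm_nonneg _) hH
  have hηle : η ≤ m ^ 2 / (8 * L) * (3 * (1 - 2 * κ₁)) := by
    rw [hη]
    exact mul_le_mul_of_nonneg_left (min_le_left _ _) (by positivity)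
  -- differentiability facts
  have hfd : Differentiable ℝ f := hf.differentiable (by norm_num)
  have hgrad_diff : Differentiable ℝ (gradient f) := by
    have h2 : Differentiable ℝ (fderiv ℝ f) := by
      have := (contDiff_succ_iff_fderiv (n := 1)).mp (by exact_mod_cast hf)
      exact this.2.2.differentiable (by norm_num)
    have : gradient f = fun x => (InnerProductSpace.toDual ℝ (EuclideanSpace ℝ (Fin p))).symm (fderiv ℝ f x) := rfl
    rw [this]
    exact (InnerProductSpace.toDual ℝ (EuclideanSpace ℝ (Fin p))).symm.toContinuousLinearEquiv.differentiable.comp h2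
  -- the line θ + t Δ
  set ℓ : ℝ → EuclideanSpace ℝ (Fin p) := fun t => θ + t • Δ with hℓ
  have hline : ∀ t : ℝ, HasDerivAt ℓ Δ t := by
    intro t
    exact (((hasDerivAt_id t).smul_const Δ).const_add θ).congr_deriv (one_smul ℝ Δ)
  have hℓ0 : ℓ 0 = θ := by simp [hℓ]
  have hℓ1 : ℓ 1 = θ + Δ := by simp [hℓ]
  have hφ' : ∀ t : ℝ, HasDerivAt (fun s => f (ℓ s)) ⟪gradient f (ℓ t), Δ⟫ t := by
    intro t
    have h1 : HasFDerivAt f (InnerProductSpace.toDual ℝ (EuclideanSpace ℝ (Fin p)) (gradient f (ℓ t))) (ℓ t) :=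
      ((hfd (ℓ t)).hasGradientAt).hasFDerivAt
    have h2 := h1.comp_hasDerivAt t (hline t)
    rw [InnerProductSpace.toDual_apply_apply] at h2
    exact h2
  have hφ'' : ∀ t : ℝ, HasDerivAt (fun s => (⟪gradient f (ℓ s), Δ⟫ : ℝ))
      ⟪hessianOf f (ℓ t) Δ, Δ⟫ t := by
    intro t
    have h1 : HasFDerivAt (gradient f) (hessianOf f (ℓ t)) (ℓ t) :=
      (hgrad_diff (ℓ t)).hasFDerivAt
    have h2 : HasDerivAt (fun s => gradient f (ℓ s)) (hessianOf f (ℓ t) Δ) t :=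
      h1.comp_hasDerivAt t (hline t)
    simpa using h2.inner ℝ (hasDerivAt_const t Δ)
  -- Taylor-type bound
  set C : ℝ := ⟪hessianOf f θ Δ, Δ⟫ with hC
  set K : ℝ := L * ‖Δ‖ ^ 3 with hK
  set ψ' : ℝ → ℝ := fun t =>
    ⟪gradient f (ℓ t), Δ⟫ - ⟪gradient f θ, Δ⟫ - t * C - K / 2 * t ^ 2 with hψ'def
  set ψ : ℝ → ℝ := fun t =>
    f (ℓ t) - f θ - t * ⟪gradient f θ, Δ⟫ - t ^ 2 / 2 * C - K / 6 * t ^ 3 with hψdef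
  have hψ'd : ∀ t : ℝ, HasDerivAt ψ (ψ' t) t := by
    intro t
    have h1 : HasDerivAt (fun s : ℝ => s * ⟪gradient f θ, Δ⟫) ⟪gradient f θ, Δ⟫ t := by
      simpa using (hasDerivAt_id t).mul_const (⟪gradient f θ, Δ⟫ : ℝ)
    have h2 : HasDerivAt (fun s : ℝ => s ^ 2 / 2 * C) (t * C) t := by
      have := ((hasDerivAt_pow 2 t).div_const 2).mul_const C
      exact this.congr_deriv (by norm_num)
    have h3 : HasDerivAt (fun s : ℝ => K / 6 * s ^ 3) (K / 2 * t ^ 2) t := by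
      have := (hasDerivAt_pow 3 t).const_mul (K / 6)
      exact this.congr_deriv (by norm_num; ring)
    have := (((((hφ' t).sub_const (f θ)).sub h1).sub h2).sub h3)
    exact this
  have hψ''d : ∀ t : ℝ, HasDerivAt ψ' (⟪hessianOf f (ℓ t) Δ, Δ⟫ - C - K * t) t := by
    intro t
    have h2 : HasDerivAt (fun s : ℝ => s * C) C t := by
      simpa using (hasDerivAt_id t).mul_const C
    have h3 : HasDerivAt (fun s : ℝ => K / 2 * s ^ 2) (K * t) t := by
      have := (hasDerivAt_pow 2 t).const_mul (K / 2)
      exact this.congr_deriv (by norm_num; ring)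
    have := ((((hφ'' t).sub_const (⟪gradient f θ, Δ⟫ : ℝ)).sub h2).sub h3)
    exact this
  have hsecond_bound : ∀ t ∈ Set.Icc (0:ℝ) 1,
      (⟪hessianOf f (ℓ t) Δ, Δ⟫ : ℝ) - C - K * t ≤ 0 := by
    intro t ht
    have h1 : (⟪hessianOf f (ℓ t) Δ, Δ⟫ : ℝ) - C
        = ⟪(hessianOf f (ℓ t) - hessianOf f θ) Δ, Δ⟫ := by
      simp [hC, ContinuousLinearMap.sub_apply, inner_sub_left]
    have h2 : (⟪(hessianOf f (ℓ t) - hessianOf f θ) Δ, Δ⟫ : ℝ)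
        ≤ ‖(hessianOf f (ℓ t) - hessianOf f θ) Δ‖ * ‖Δ‖ := real_inner_le_norm _ _
    have h3 : ‖(hessianOf f (ℓ t) - hessianOf f θ) Δ‖
        ≤ ‖hessianOf f (ℓ t) - hessianOf f θ‖ * ‖Δ‖ :=
      ContinuousLinearMap.le_opNorm _ _
    have h4 : ‖hessianOf f (ℓ t) - hessianOf f θ‖ ≤ L * (t * ‖Δ‖) := by
      have := hlip (ℓ t) θ
      have h5 : ℓ t - θ = t • Δ := by simp [hℓ]
      rw [h5, norm_smul, Real.norm_eq_abs, abs_of_nonneg ht.1] at this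
      exact this
    have hΔ0 : (0:ℝ) ≤ ‖Δ‖ := norm_nonneg _
    have ht0 : (0:ℝ) ≤ t := ht.1
    rw [h1]
    have h6 : ‖(hessianOf f (ℓ t) - hessianOf f θ) Δ‖ * ‖Δ‖ ≤ L * (t * ‖Δ‖) * ‖Δ‖ * ‖Δ‖ := by
      apply mul_le_mul_of_nonneg_right _ hΔ0
      exact le_trans h3 (mul_le_mul_of_nonneg_right h4 hΔ0)
    have h7 : (⟪(hessianOf f (ℓ t) - hessianOf f θ) Δ, Δ⟫ : ℝ) ≤ L * (t * ‖Δ‖) * ‖Δ‖ * ‖Δ‖ :=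
      le_trans h2 h6
    have heq : L * (t * ‖Δ‖) * ‖Δ‖ * ‖Δ‖ = K * t := by rw [hK]; ring
    linarith [heq ▸ h7]
  -- ψ' is nonpositive on [0,1]
  have hψ'cont : ContinuousOn ψ' (Set.Icc 0 1) :=
    fun t _ => ((hψ''d t).differentiableAt.continuousAt).continuousWithinAt
  have hψ'anti : AntitoneOn ψ' (Set.Icc (0:ℝ) 1) := by
    apply antitoneOn_of_deriv_nonpos (convex_Icc 0 1) hψ'cont
    · intro t ht
      exact ((hψ''d t).differentiableAt).differentiableWithinAt
    · intro t ht
      rw [interior_Icc] at ht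
      rw [(hψ''d t).deriv]
      exact hsecond_bound t ⟨le_of_lt ht.1, le_of_lt ht.2⟩
  have hψ'0 : ψ' 0 = 0 := by simp [hψ'def, hℓ0]
  have hψ'nonpos : ∀ t ∈ Set.Icc (0:ℝ) 1, ψ' t ≤ 0 := by
    intro t ht
    have := hψ'anti (Set.left_mem_Icc.mpr zero_le_one) ht ht.1
    rwa [hψ'0] at this
  have hψcont : ContinuousOn ψ (Set.Icc 0 1) :=
    fun t _ => ((hψ'd t).differentiableAt.continuousAt).continuousWithinAt
  have hψanti : AntitoneOn ψ (Set.Icc (0:ℝ) 1) := by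
    apply antitoneOn_of_deriv_nonpos (convex_Icc 0 1) hψcont
    · intro t ht
      exact ((hψ'd t).differentiableAt).differentiableWithinAt
    · intro t ht
      rw [interior_Icc] at ht
      rw [(hψ'd t).deriv]
      exact hψ'nonpos t ⟨le_of_lt ht.1, le_of_lt ht.2⟩
  have hψ0 : ψ 0 = 0 := by simp [hψdef, hℓ0]
  have hψ1 : ψ 1 ≤ 0 := by
    have := hψanti (Set.left_mem_Icc.mpr zero_le_one) (Set.right_mem_Icc.mpr zero_le_one)
      zero_le_one
    rwa [hψ0] at this
  have hTaylor : f (θ + Δ) ≤ f θ + ⟪gradient f θ, Δ⟫ + C / 2 + K / 6 := by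
    have h1 : ψ 1 = f (θ + Δ) - f θ - ⟪gradient f θ, Δ⟫ - C / 2 - K / 6 := by
      simp [hψdef, hℓ1]; ring
    linarith [hψ1, h1 ▸ hψ1]
  -- positivity of H and invertibility
  have hHpos : ∀ v : EuclideanSpace ℝ (Fin p), m / 2 * ‖v‖ ^ 2 ≤ ⟪H v, v⟫ := by
    intro v
    have h1 : (⟪(hessianOf f θ - H) v, v⟫ : ℝ) ≤ γh * ‖v‖ ^ 2 := by
      have h2 := real_inner_le_norm ((hessianOf f θ - H) v) v
      have h3 : ‖(hessianOf f θ - H) v‖ ≤ γh * ‖v‖ := by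
        calc ‖(hessianOf f θ - H) v‖ ≤ ‖hessianOf f θ - H‖ * ‖v‖ :=
            ContinuousLinearMap.le_opNorm _ _
          _ ≤ γh * ‖v‖ := by
            rw [norm_sub_rev] at hH
            exact mul_le_mul_of_nonneg_right hH (norm_nonneg _)
      nlinarith [norm_nonneg v]
    have h4 : (⟪H v, v⟫ : ℝ) = ⟪hessianOf f θ v, v⟫ - ⟪(hessianOf f θ - H) v, v⟫ := by
      simp [ContinuousLinearMap.sub_apply, inner_sub_left]
    have h5 := hconv θ v
    nlinarith [norm_nonneg v]
  have hinj : Function.Injective H := by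
    intro u v huv
    have h1 : H (u - v) = 0 := by simp [map_sub, huv]
    have h2 := hHpos (u - v)
    rw [h1] at h2
    simp only [inner_zero_left] at h2
    have hsq : ‖u - v‖ ^ 2 = 0 := by nlinarith [sq_nonneg ‖u - v‖]
    have : ‖u - v‖ = 0 := by
      have := sq_eq_zero_iff.mp hsq
      exact this
    rwa [norm_eq_zero, sub_eq_zero] at this
  have hker : H.ker = ⊥ := LinearMap.ker_eq_bot.mpr hinj
  have hsurj : H.range = ⊤ :=
    LinearMap.range_eq_top.mpr (LinearMap.injective_iff_surjective.mp hinj)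
  set e := ContinuousLinearEquiv.ofBijective H hker hsurj with he
  have hcoe : (e : EuclideanSpace ℝ (Fin p) →L[ℝ] EuclideanSpace ℝ (Fin p)) = H := ContinuousLinearEquiv.coe_ofBijective H hker hsurj
  have hHinv : H.inverse = (e.symm : EuclideanSpace ℝ (Fin p) →L[ℝ] EuclideanSpace ℝ (Fin p)) := by
    rw [← hcoe, ContinuousLinearMap.inverse_equiv]
  set u : EuclideanSpace ℝ (Fin p) := H.inverse g with hu
  have hHu : H u = g := by
    rw [hu, hHinv]
    have : H (e.symm g) = e (e.symm g) := by rw [← hcoe]; rfl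
    simpa [this] using e.apply_symm_apply g
  -- norms and lambda
  have hlam_eq : lam2 = ⟪H u, u⟫ := by rw [hlam2, hHu]
  have hlam_lb : m / 2 * ‖u‖ ^ 2 ≤ lam2 := hlam_eq ▸ hHpos u
  have hlam_nonneg : 0 ≤ lam2 := le_trans (by positivity) hlam_lb
  have hlam_ub : lam2 ≤ ‖g‖ * ‖u‖ := by
    rw [hlam2]
    exact real_inner_le_norm g u
  have hgnorm : ‖g‖ ≤ 2 * η := by
    have heq : g = (g - gradient f θ) + gradient f θ := by abel
    calc ‖g‖ = ‖(g - gradient f θ) + gradient f θ‖ := by rw [← heq]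
      _ ≤ ‖g - gradient f θ‖ + ‖gradient f θ‖ := norm_add_le _ _
      _ ≤ 2 * η := by linarith
  have hunorm : ‖u‖ ≤ 4 * η / m := by
    rcases eq_or_lt_of_le (norm_nonneg u) with h0 | h0
    · rw [← h0]; positivity
    · have h1 : m / 2 * ‖u‖ ^ 2 ≤ 2 * η * ‖u‖ := by
        nlinarith
      rw [le_div_iff₀ hm]
      nlinarith
  have husq : ‖u‖ ^ 2 ≤ 2 / m * lam2 := by
    rw [div_mul_eq_mul_div, le_div_iff₀ hm] at *
    nlinarith
  have hΔnorm : ‖Δ‖ = ‖u‖ := by rw [hΔ, norm_neg]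
  -- inner product decompositions
  have hgΔ : (⟪g, Δ⟫ : ℝ) = -lam2 := by
    rw [hΔ, inner_neg_right, hlam2]
  have hgradΔ : (⟪gradient f θ, Δ⟫ : ℝ) ≤ -lam2 + γg * ‖u‖ := by
    have h1 : (⟪gradient f θ, Δ⟫ : ℝ) = ⟪g, Δ⟫ + ⟪gradient f θ - g, Δ⟫ := by
      have heq : g + (gradient f θ - g) = gradient f θ := by abel
      rw [← inner_add_left, heq]
    have h2 : (⟪gradient f θ - g, Δ⟫ : ℝ) ≤ γg * ‖u‖ := by
      calc (⟪gradient f θ - g, Δ⟫ : ℝ) ≤ ‖gradient f θ - g‖ * ‖Δ‖ := real_inner_le_norm _ _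
        _ ≤ γg * ‖u‖ := by
          rw [norm_sub_rev] at hg
          rw [hΔnorm]
          exact mul_le_mul_of_nonneg_right hg (norm_nonneg _)
    rw [h1, hgΔ]
    linarith
  have hCbound : C ≤ lam2 + γh * ‖u‖ ^ 2 := by
    have h1 : (⟪H Δ, Δ⟫ : ℝ) = lam2 := by
      rw [hΔ, map_neg, inner_neg_neg]; exact hlam_eq.symm
    have h2 : (⟪(hessianOf f θ - H) Δ, Δ⟫ : ℝ) = C - ⟪H Δ, Δ⟫ := by
      simp [hC, ContinuousLinearMap.sub_apply, inner_sub_left]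
    have h3 : (⟪(hessianOf f θ - H) Δ, Δ⟫ : ℝ) ≤ γh * ‖u‖ ^ 2 := by
      calc (⟪(hessianOf f θ - H) Δ, Δ⟫ : ℝ) ≤ ‖(hessianOf f θ - H) Δ‖ * ‖Δ‖ :=
          real_inner_le_norm _ _
        _ ≤ ‖hessianOf f θ - H‖ * ‖Δ‖ * ‖Δ‖ := by
            nlinarith [ContinuousLinearMap.le_opNorm (hessianOf f θ - H) Δ, norm_nonneg Δ,
              norm_nonneg ((hessianOf f θ - H) Δ)]
        _ ≤ γh * ‖u‖ ^ 2 := by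
            rw [norm_sub_rev] at hH
            rw [hΔnorm]
            nlinarith [norm_nonneg u]
    linarith [h1 ▸ h2, h3]
  -- final assembly
  have hKb : K / 6 ≤ (1 / 2 - κ₁) * lam2 := by
    rw [hK, hΔnorm]
    have h1 : ‖u‖ ^ 3 ≤ (4 * η / m) * (2 / m * lam2) := by
      have : ‖u‖ ^ 3 = ‖u‖ * ‖u‖ ^ 2 := by ring
      rw [this]
      have h2 : ‖u‖ * ‖u‖ ^ 2 ≤ (4 * η / m) * ‖u‖ ^ 2 :=
        mul_le_mul_of_nonneg_right hunorm (sq_nonneg _)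
      have h3 : (4 * η / m) * ‖u‖ ^ 2 ≤ (4 * η / m) * (2 / m * lam2) :=
        mul_le_mul_of_nonneg_left husq (by positivity)
      linarith
    have h4 : L * ((4 * η / m) * (2 / m * lam2)) / 6 ≤ (1 / 2 - κ₁) * lam2 := by
      have h5 : η * L * 8 ≤ m ^ 2 * (3 * (1 - 2 * κ₁)) := by
        rw [div_mul_eq_mul_div, le_div_iff₀ (by positivity : (0:ℝ) < 8 * L)] at hηle
        linarith
      have hm2 : (0:ℝ) < m ^ 2 := by positivity
      have key : L * ((4 * η / m) * (2 / m * lam2)) / 6 = (4 * L * η / (3 * m ^ 2)) * lam2 := by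
        field_simp; ring
      rw [key]
      apply mul_le_mul_of_nonneg_right _ hlam_nonneg
      rw [div_le_iff₀ (by positivity : (0:ℝ) < 3 * m ^ 2)]
      nlinarith
    have hfin : L * ‖u‖ ^ 3 / 6 ≤ L * ((4 * η / m) * (2 / m * lam2)) / 6 := by
      have := mul_le_mul_of_nonneg_left h1 (le_of_lt hL)
      linarith
    linarith
  have hB2 : γg * ‖u‖ ≤ 4 * γg * η / m :=
    by
      have := mul_le_mul_of_nonneg_left hunorm hγg0
      calc γg * ‖u‖ ≤ γg * (4 * η / m) := this
        _ = 4 * γg * η / m := by ring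
  have hB3 : γh / 2 * ‖u‖ ^ 2 ≤ 8 * γh * η ^ 2 / m ^ 2 := by
    have h1 : ‖u‖ ^ 2 ≤ (4 * η / m) ^ 2 := by
      nlinarith [norm_nonneg u, hunorm]
    have := mul_le_mul_of_nonneg_left h1 (by linarith : (0:ℝ) ≤ γh / 2)
    calc γh / 2 * ‖u‖ ^ 2 ≤ γh / 2 * (4 * η / m) ^ 2 := this
      _ = 8 * γh * η ^ 2 / m ^ 2 := by field_simp; ring
  -- combine
  have main : f (θ + Δ) ≤ f θ - lam2 / 2 + γg * ‖u‖ + γh / 2 * ‖u‖ ^ 2 + K / 6 := by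
    have := hTaylor
    linarith [hgradΔ, hCbound]
  have e1 : 8 * γg * η / m = 2 * (4 * γg * η / m) := by ring
  have e2 : 16 * γh * η ^ 2 / m ^ 2 = 2 * (8 * γh * η ^ 2 / m ^ 2) := by ring
  rw [e1, e2] at hζ
  linarith [hB2, hB3, hKb, main, hζ]
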